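/- If Φ(f) = C₁f · C₂f where C₁, C₂ are linear operators from A to Aʳ, then Γ_Φ(f) = Γ(C₁f, C₂f) + (1/2) C₁f·[L,C₂]f + (1/2)[L,C₁]f·C₂f, where Γ is the carré du champ of L extended componentwise and [L,C] denotes componentwise commutators. In particular, if C₁ = C₂ = C, then Γ_{|C·|²}(f) ≥ Cf·[L,C]f. -/

import Mathlib

private lemma Lsum {E : Type*} (L : (E → ℝ) → E → ℝ)
    (hLadd : ∀ g h : E → ℝ, L (g + h) = L g + L h) (hL0 : L 0 = 0)
    {r : ℕ} (g : Fin r → E → ℝ) :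
    L (∑ i, g i) = ∑ i, L (g i) := by
  induction (Finset.univ : Finset (Fin r)) using Finset.induction with
  | empty => simpa using hL0
  | insert _ _ h ih => rw [Finset.sum_insert h, Finset.sum_insert h, hLadd, ih]

/-- quadratic `Φ`'s. If `Φ(f) = C₁f · C₂f` for linear operators
`C₁, C₂ : A → Aʳ`, then
`Γ_Φ(f) = Γ(C₁f, C₂f) + (1/2) C₁f·[L,C₂]f + (1/2)[L,C₁]f·C₂f`,
where `Γ(g,h) = (1/2)(L(gh) − hLg − gLh)` is the carré du champ (extended componentwise),
and `[L,c]f = L(cf) − c(Lf)`.  In particular, if `C₁ = C₂ = C` then (by positivity of `Γ`)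
`Γ_{|C·|²}(f) ≥ Cf·[L,C]f`. -/
theorem stmt4 {E : Type*} (L : (E → ℝ) → E → ℝ) (r : ℕ)
    (C₁ C₂ C : Fin r → (E → ℝ) → E → ℝ)
    (hLadd : ∀ g h : E → ℝ, L (g + h) = L g + L h)
    (hL0 : L 0 = 0)
    -- positivity of the carré du champ quadratic form
    (hΓpos : ∀ g : E → ℝ, ∀ x, 0 ≤ (L (g * g) x - 2 * g x * L g x) / 2) :
    -- the identity for `Γ_Φ` with `Φ f = C₁f · C₂f`
    ((∀ f : E → ℝ, ∀ x : E,
      (L (fun y => ∑ i, C₁ i f y * C₂ i f y) x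
          - ∑ i, (C₁ i f x * C₂ i (L f) x + C₁ i (L f) x * C₂ i f x)) / 2
        = (∑ i, (L (C₁ i f * C₂ i f) x - C₂ i f x * L (C₁ i f) x
              - C₁ i f x * L (C₂ i f) x) / 2)
          + (1/2) * ∑ i, C₁ i f x * (L (C₂ i f) x - C₂ i (L f) x)
          + (1/2) * ∑ i, (L (C₁ i f) x - C₁ i (L f) x) * C₂ i f x)
    -- the inequality `Γ_{|C·|²} f ≥ Cf·[L,C]f`
    ∧ (∀ f : E → ℝ, ∀ x : E,
      ∑ i, C i f x * (L (C i f) x - C i (L f) x)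
        ≤ (L (fun y => ∑ i, C i f y * C i f y) x
            - ∑ i, 2 * C i f x * C i (L f) x) / 2)) := by
  constructor
  · intro f x
    have hL : L (fun y => ∑ i, C₁ i f y * C₂ i f y) x
        = ∑ i, L (C₁ i f * C₂ i f) x := by
      have : (fun y => ∑ i, C₁ i f y * C₂ i f y) = ∑ i, C₁ i f * C₂ i f := by
        funext y; simp [Finset.sum_apply]
      rw [this, Lsum L hLadd hL0, Finset.sum_apply]
    rw [hL, ← Finset.sum_sub_distrib, Finset.mul_sum, Finset.mul_sum,
      Finset.sum_div, ← Finset.sum_add_distrib,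
      ← Finset.sum_add_distrib]
    apply Finset.sum_congr rfl
    intro i _
    ring
  · intro f x
    have hL : L (fun y => ∑ i, C i f y * C i f y) x
        = ∑ i, L (C i f * C i f) x := by
      have : (fun y => ∑ i, C i f y * C i f y) = ∑ i, C i f * C i f := by
        funext y; simp [Finset.sum_apply]
      rw [this, Lsum L hLadd hL0, Finset.sum_apply]
    rw [hL, ← Finset.sum_sub_distrib, Finset.sum_div]
    apply Finset.sum_le_sum
    intro i _
    have := hΓpos (C i f) x
    linarith
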